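/- arXiv:math/0503745 — 4 statements merged into one kernel-verified Lean document; each statement's English description precedes it below -/
import Mathlib

section
/- Let q be a prime power with q ≡ 1 (mod 4), and let P_q be the Paley graph on GF(q). Then P_q is (q−1)/2-regular, any two distinct adjacent vertices have exactly (q−5)/4 common neighbors, and any two distinct non-adjacent vertices have exactly (q−1)/4 common neighbors; that is, P_q is a strongly regular graph with parameters (q, (q−1)/2, (q−5)/4, (q−1)/4). More precisely, for any two distinct vertices a, b, the number of common neighbors of a and b equals (q−3)/4 − χ(a−b)/2, where χ is the quadratic residue character of GF(q). -/
open scoped Classical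

/-- The quadratic residue character of a finite field: `χ(0) = 0`, `χ(x) = 1` if `x ≠ 0` is a
square, and `χ(x) = −1` otherwise. -/
noncomputable def quadChar (F : Type*) [Field F] (x : F) : ℝ :=
  if x = 0 then 0 else if IsSquare x then 1 else -1

/-- The Paley graph on a finite field `F`: distinct vertices `a, b` are adjacent iff `a − b`
(or `b − a`) is a nonzero square. When `−1` is a square in `F` (e.g. `|F| ≡ 1 (mod 4)`),
this is exactly: `a ≠ b` and `a − b` is a square. -/
def paleyGraph (F : Type*) [Field F] : SimpleGraph F :=
  SimpleGraph.fromRel fun a b => IsSquare (a - b)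

open Finset

section Aux
set_option linter.unusedSectionVars false
variable {F : Type*} [Field F] [Fintype F] [DecidableEq F]

lemma quadChar_eq_cast (x : F) : quadChar F x = ((quadraticChar F x : ℤ) : ℝ) := by
  rw [quadraticChar_apply, quadraticCharFun]
  unfold quadChar
  split_ifs <;> simp

lemma quadChar_mul (x y : F) :
    quadChar F (x * y) = quadChar F x * quadChar F y := by
  simp only [quadChar_eq_cast, ← Int.cast_mul, map_mul]

lemma quadChar_sq {x : F} (hx : x ≠ 0) : quadChar F x * quadChar F x = 1 := by
  simp only [quadChar, if_neg hx]
  split_ifs <;> norm_num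

lemma quadChar_sum (h2 : ringChar F ≠ 2) : ∑ x : F, quadChar F x = 0 := by
  simp only [quadChar_eq_cast]
  rw [← Int.cast_sum, quadraticChar_sum_zero h2, Int.cast_zero]

lemma quadChar_one : quadChar F (1 : F) = 1 := by simp [quadChar]

lemma quadChar_sum_mul (h2 : ringChar F ≠ 2) {c : F} (hc : c ≠ 0) :
    ∑ t : F, quadChar F t * quadChar F (t - c) = -1 := by
  have h0 : ∑ t : F, quadChar F t * quadChar F (t - c)
      = ∑ t ∈ univ \ {(0 : F)}, quadChar F t * quadChar F (t - c) := by
    rw [sum_sdiff_eq_sub (subset_univ _), sum_singleton]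
    simp [quadChar]
  rw [h0]
  have h1 : ∀ t ∈ univ \ {(0 : F)},
      quadChar F t * quadChar F (t - c) = quadChar F (1 - c * t⁻¹) := by
    intro t ht
    have ht0 : t ≠ 0 := by simpa using ht
    have : t - c = t * (1 - c * t⁻¹) := by field_simp
    rw [this, quadChar_mul, ← mul_assoc, quadChar_sq ht0, one_mul]
  rw [sum_congr rfl h1]
  have h2' : ∑ t ∈ univ \ {(0 : F)}, quadChar F (1 - c * t⁻¹)
      = ∑ u ∈ univ \ {(1 : F)}, quadChar F u := by
    apply Finset.sum_bij' (fun t _ => 1 - c * t⁻¹) (fun u _ => c * (1 - u)⁻¹)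
    · intro t ht
      have ht0 : t ≠ 0 := by simpa using ht
      simp only [mem_sdiff, mem_univ, mem_singleton, true_and]
      intro h
      have : c * t⁻¹ = 0 := by linear_combination -h
      simp [ht0, hc] at this
    · intro u hu
      have hu1 : u ≠ 1 := by simpa using hu
      simp only [mem_sdiff, mem_univ, mem_singleton, true_and]
      exact mul_ne_zero hc (inv_ne_zero (sub_ne_zero.mpr (fun h => hu1 h.symm)))
    · intro t ht
      have ht0 : t ≠ 0 := by simpa using ht
      field_simp
      rw [sub_sub_cancel, div_self hc]
    · intro u hu
      have hu1 : u ≠ 1 := by simpa using hu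
      have : (1 : F) - u ≠ 0 := sub_ne_zero.mpr (fun h => hu1 h.symm)
      field_simp
      exact sub_sub_cancel 1 u
    · intro t ht
      rfl
  rw [h2', sum_sdiff_eq_sub (subset_univ _), sum_singleton, quadChar_sum h2, quadChar_one]
  ring

end Aux

/-- Let `q ≡ 1 (mod 4)` be a prime power and let `P_q` be the Paley graph on `GF(q)`. Then
`P_q` is strongly regular with parameters `(q, (q−1)/2, (q−5)/4, (q−1)/4)`; more precisely,
for any two distinct vertices `a, b` the number of their common neighbors equals
`(q − 3)/4 − χ(a − b)/2`, where `χ` is the quadratic residue character. -/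
theorem stmt_3 (q : ℕ) (hq : ∃ p k : ℕ, p.Prime ∧ 0 < k ∧ q = p ^ k) (hq4 : q % 4 = 1)
    (F : Type*) [Field F] [Fintype F] (hF : Fintype.card F = q) :
    (paleyGraph F).IsSRGWith q ((q - 1) / 2) ((q - 5) / 4) ((q - 1) / 4) ∧
    (∀ v : F, (((paleyGraph F).neighborSet v).ncard : ℝ) = ((q : ℝ) - 1) / 2) ∧
    (∀ a b : F, (paleyGraph F).Adj a b →
      (((paleyGraph F).commonNeighbors a b).ncard : ℝ) = ((q : ℝ) - 5) / 4) ∧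
    (∀ a b : F, a ≠ b → ¬ (paleyGraph F).Adj a b →
      (((paleyGraph F).commonNeighbors a b).ncard : ℝ) = ((q : ℝ) - 1) / 4) ∧
    ∀ a b : F, a ≠ b →
      (((paleyGraph F).commonNeighbors a b).ncard : ℝ) =
        ((q : ℝ) - 3) / 4 - quadChar F (a - b) / 2 := by
  obtain ⟨p, k, hp, hk, hqe⟩ := hq
  have hq2 : 2 ≤ q := by
    subst hqe; calc 2 = 2 ^ 1 := rfl
    _ ≤ p ^ k := Nat.pow_le_pow_left hp.two_le k |>.trans' (Nat.pow_le_pow_right (by norm_num) hk)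
  obtain ⟨m, hm, hqm⟩ : ∃ m : ℕ, 1 ≤ m ∧ q = 4 * m + 1 := ⟨q / 4, by omega, by omega⟩
  have h2 : ringChar F ≠ 2 := by
    intro h
    have := (FiniteField.even_card_iff_char_two (F := F)).mp h
    omega
  have hs : IsSquare (-1 : F) := by
    rw [FiniteField.isSquare_neg_one_iff, hF]; omega
  have hneg : ∀ x : F, IsSquare (-x) ↔ IsSquare x := by
    intro x
    constructor
    · intro h; simpa using hs.mul h
    · intro h; simpa [neg_one_mul] using hs.mul h
  have hqneg : quadChar F (-1 : F) = 1 := by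
    simp [quadChar, hs, neg_ne_zero.mpr (one_ne_zero (α := F))]
  have hqsymm : ∀ a b : F, quadChar F (b - a) = quadChar F (a - b) := by
    intro a b
    have : b - a = (-1) * (a - b) := by ring
    rw [this, quadChar_mul, hqneg, one_mul]
  have hadj : ∀ a b : F, (paleyGraph F).Adj a b ↔ a ≠ b ∧ IsSquare (a - b) := by
    intro a b
    simp only [paleyGraph, SimpleGraph.fromRel_adj]
    have : IsSquare (b - a) ↔ IsSquare (a - b) := by rw [← neg_sub a b, hneg]
    rw [this]
    tauto
  -- common neighbor finset description
  have hCN : ∀ a b : F, ((paleyGraph F).commonNeighbors a b).toFinset =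
      (univ \ {a, b}).filter (fun z => IsSquare (z - a) ∧ IsSquare (z - b)) := by
    intro a b
    ext z
    have h1 : IsSquare (a - z) ↔ IsSquare (z - a) := by rw [← neg_sub z a, hneg]
    have h2 : IsSquare (b - z) ↔ IsSquare (z - b) := by rw [← neg_sub z b, hneg]
    simp only [Set.mem_toFinset, SimpleGraph.mem_commonNeighbors, hadj, mem_filter,
      mem_sdiff, mem_univ, mem_insert, mem_singleton, true_and, h1, h2]
    constructor
    · rintro ⟨⟨h, h'⟩, ⟨g, g'⟩⟩; exact ⟨by tauto, h', g'⟩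
    · rintro ⟨h, h', g'⟩; exact ⟨⟨fun e => h (Or.inl e.symm), h'⟩, fun e => h (Or.inr e.symm), g'⟩
  -- sum of quadChar (z - a) over all z is 0
  have hshift : ∀ a : F, ∑ z : F, quadChar F (z - a) = 0 := by
    intro a
    calc ∑ z : F, quadChar F (z - a) = ∑ t : F, quadChar F t :=
          Fintype.sum_equiv (Equiv.subRight a) _ _ (fun z => rfl)
      _ = 0 := quadChar_sum h2
  -- the key count
  have key : ∀ a b : F, a ≠ b →
      ((((paleyGraph F).commonNeighbors a b).toFinset.card : ℝ)) =
        ((q : ℝ) - 3) / 4 - quadChar F (a - b) / 2 := by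
    intro a b hab
    rw [hCN a b]
    rw [card_filter]
    push_cast
    have e1 : ∀ z ∈ univ \ ({a, b} : Finset F),
        (if IsSquare (z - a) ∧ IsSquare (z - b) then (1 : ℝ) else 0)
          = (1 + quadChar F (z - a) + quadChar F (z - b)
              + quadChar F (z - a) * quadChar F (z - b)) / 4 := by
      intro z hz
      simp only [mem_sdiff, mem_univ, mem_insert, mem_singleton, true_and] at hz
      have hza : z - a ≠ 0 := sub_ne_zero.mpr (fun e => hz (Or.inl e))
      have hzb : z - b ≠ 0 := sub_ne_zero.mpr (fun e => hz (Or.inr e))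
      simp only [quadChar, if_neg hza, if_neg hzb]
      split_ifs <;> first | (exfalso; tauto) | norm_num
    rw [Finset.sum_congr rfl e1]
    have hsub : ({a, b} : Finset F) ⊆ univ := subset_univ _
    have hcard2 : ({a, b} : Finset F).card = 2 := card_pair hab
    have s0 : ∑ _z ∈ univ \ ({a, b} : Finset F), (1 : ℝ) = (q : ℝ) - 2 := by
      rw [sum_const, card_sdiff_of_subset hsub, hcard2, card_univ, hF, nsmul_eq_mul, mul_one]
      push_cast [Nat.cast_sub (by omega : 2 ≤ q)]
      ring
    have s1 : ∀ c : F, c ≠ a → c ≠ b → ∑ z ∈ univ \ ({a, b} : Finset F), quadChar F (z - c)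
        = - quadChar F (a - c) - quadChar F (b - c) := by
      intro c _ _
      rw [sum_sdiff_eq_sub hsub, hshift c, sum_pair hab]
      ring
    have qc0 : quadChar F (0 : F) = 0 := by simp [quadChar]
    have sa : ∑ z ∈ univ \ ({a, b} : Finset F), quadChar F (z - a) = - quadChar F (a - b) := by
      rw [sum_sdiff_eq_sub hsub, hshift a, sum_pair hab, sub_self, qc0, hqsymm a b]
      ring
    have sb : ∑ z ∈ univ \ ({a, b} : Finset F), quadChar F (z - b) = - quadChar F (a - b) := by
      rw [sum_sdiff_eq_sub hsub, hshift b, sum_pair hab, sub_self, qc0]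
      ring
    have sab : ∑ z ∈ univ \ ({a, b} : Finset F),
        quadChar F (z - a) * quadChar F (z - b) = -1 := by
      rw [sum_sdiff_eq_sub hsub, sum_pair hab]
      have hfull : ∑ z : F, quadChar F (z - a) * quadChar F (z - b) = -1 := by
        have := quadChar_sum_mul (F := F) h2 (c := b - a) (sub_ne_zero.mpr (Ne.symm hab))
        rw [Fintype.sum_equiv (Equiv.subRight a) _
          (fun t => quadChar F t * quadChar F (t - (b - a)))
          (fun z => by rw [Equiv.subRight_apply]; ring_nf)]
        exact this
      rw [hfull]
      simp only [sub_self, qc0, zero_mul, mul_zero, add_zero]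
      ring
    clear s1
    rw [show (fun z => (1 + quadChar F (z - a) + quadChar F (z - b)
        + quadChar F (z - a) * quadChar F (z - b)) / 4)
      = (fun z => (1 : ℝ) / 4 + quadChar F (z - a) / 4 + quadChar F (z - b) / 4
        + quadChar F (z - a) * quadChar F (z - b) / 4) from funext fun z => by ring]
    rw [sum_add_distrib, sum_add_distrib, sum_add_distrib]
    rw [← sum_div, ← sum_div, ← sum_div, ← sum_div, s0, sa, sb, sab]
    ring
  -- ncard equals toFinset card
  have hNC : ∀ a b : F, (((paleyGraph F).commonNeighbors a b).ncard : ℝ)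
      = (((paleyGraph F).commonNeighbors a b).toFinset.card : ℝ) := by
    intro a b
    rw [Set.ncard_eq_toFinset_card']
  -- adjacency values of quadChar
  have hχadj : ∀ a b : F, (paleyGraph F).Adj a b → quadChar F (a - b) = 1 := by
    intro a b h
    rw [hadj] at h
    simp [quadChar, sub_ne_zero.mpr h.1, h.2]
  have hχnadj : ∀ a b : F, a ≠ b → ¬ (paleyGraph F).Adj a b → quadChar F (a - b) = -1 := by
    intro a b hab h
    rw [hadj] at h
    have : ¬ IsSquare (a - b) := fun hsq => h ⟨hab, hsq⟩
    simp [quadChar, sub_ne_zero.mpr hab, this]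
  -- degree
  have hNset : ∀ v : F, ((paleyGraph F).neighborSet v).toFinset
      = (univ \ {v}).filter (fun w => IsSquare (w - v)) := by
    intro v
    ext w
    have h1 : IsSquare (v - w) ↔ IsSquare (w - v) := by rw [← neg_sub w v, hneg]
    simp only [Set.mem_toFinset, SimpleGraph.mem_neighborSet, hadj, mem_filter, mem_sdiff,
      mem_univ, mem_singleton, true_and, h1, ne_comm]
  have hdeg : ∀ v : F, ((((paleyGraph F).neighborSet v).toFinset.card : ℝ)) = ((q : ℝ) - 1) / 2 := by
    intro v
    rw [hNset v, card_filter]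
    push_cast
    have e1 : ∀ w ∈ univ \ ({v} : Finset F),
        (if IsSquare (w - v) then (1 : ℝ) else 0) = (1 + quadChar F (w - v)) / 2 := by
      intro w hw
      have hwv : w - v ≠ 0 := sub_ne_zero.mpr (by simpa using hw)
      simp only [quadChar, if_neg hwv]
      split_ifs <;> norm_num
    rw [Finset.sum_congr rfl e1]
    rw [show (fun w => (1 + quadChar F (w - v)) / 2)
      = (fun w => (1 : ℝ) / 2 + quadChar F (w - v) / 2) from funext fun w => by ring]
    have hA : ∑ _w ∈ univ \ ({v} : Finset F), (1 : ℝ) = (q : ℝ) - 1 := by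
      rw [sum_const, card_sdiff_of_subset (subset_univ _), card_univ, hF, card_singleton, nsmul_eq_mul,
        mul_one]
      push_cast [Nat.cast_sub (by omega : 1 ≤ q)]
      ring
    have hB : ∑ w ∈ univ \ ({v} : Finset F), quadChar F (w - v) = 0 := by
      rw [sum_sdiff_eq_sub (subset_univ _), hshift v, sum_singleton, sub_self]
      simp [quadChar]
    rw [sum_add_distrib, ← sum_div, ← sum_div, hA, hB]
    ring
  -- natural number versions
  have hdegN : ∀ v : F, (paleyGraph F).degree v = (q - 1) / 2 := by
    intro v
    have h1 : ((paleyGraph F).degree v : ℝ) = (((q - 1) / 2 : ℕ) : ℝ) := by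
      have hd : (paleyGraph F).degree v = ((paleyGraph F).neighborSet v).toFinset.card := by
        rw [← SimpleGraph.card_neighborSet_eq_degree, Set.toFinset_card]
      rw [hd, show ((q - 1) / 2 : ℕ) = 2 * m from by omega]
      rw [hdeg v, hqm]
      push_cast
      ring
    exact_mod_cast h1
  have hCNcard : ∀ a b : F, a ≠ b → (Fintype.card ((paleyGraph F).commonNeighbors a b) : ℝ)
      = ((q : ℝ) - 3) / 4 - quadChar F (a - b) / 2 := by
    intro a b hab
    rw [← Set.toFinset_card]
    exact key a b hab
  refine ⟨⟨hF, hdegN, ?_, ?_⟩, ?_, ?_, ?_, ?_⟩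
  · intro v w h
    have hvw : v ≠ w := h.ne
    have h1 : (Fintype.card ((paleyGraph F).commonNeighbors v w) : ℝ)
        = (((q - 5) / 4 : ℕ) : ℝ) := by
      rw [hCNcard v w hvw, hχadj v w h, show ((q - 5) / 4 : ℕ) = m - 1 from by omega, hqm]
      push_cast [Nat.cast_sub hm]
      ring
    exact_mod_cast h1
  · intro v w hvw h
    have h1 : (Fintype.card ((paleyGraph F).commonNeighbors v w) : ℝ)
        = (((q - 1) / 4 : ℕ) : ℝ) := by
      rw [hCNcard v w hvw, hχnadj v w hvw h, show ((q - 1) / 4 : ℕ) = m from by omega, hqm]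
      push_cast
      ring
    exact_mod_cast h1
  · intro v
    rw [Set.ncard_eq_toFinset_card', hdeg v]
  · intro a b h
    rw [hNC a b, key a b h.ne, hχadj a b h]
    ring
  · intro a b hab h
    rw [hNC a b, key a b hab, hχnadj a b hab h]
    ring
  · intro a b hab
    rw [hNC a b, key a b hab]
end

section
/- Let G be an (n,d,λ)-graph with d − λ ≥ 2. Then G is d-edge-connected: for every nonempty proper subset U of the vertex set with |U| ≤ n/2, the number of edges of G with exactly one endpoint in U is at least d. -/
/-- An `(n,d,λ)`-graph: a `d`-regular graph on `n` vertices all of whose adjacency-matrix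
eigenvalues, except the largest one `λ₁ = d`, are at most `lam` in absolute value. -/
def IsNDL {V : Type*} [Fintype V] [DecidableEq V] (G : SimpleGraph V) [DecidableRel G.Adj]
    (n d : ℕ) (lam : ℝ) : Prop :=
  Fintype.card V = n ∧ G.IsRegularOfDegree d ∧
    ∃ (hA : (G.adjMatrix ℝ).IsHermitian) (i₀ : V),
      hA.eigenvalues i₀ = (d : ℝ) ∧ ∀ i : V, i ≠ i₀ → |hA.eigenvalues i| ≤ lam

/-- `eCount G U W` is the number of edges of `G` with one endpoint in `U` and the other in `W`
(for disjoint `U, W`, this is exactly the number of such edges). -/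
def eCount {V : Type*} [DecidableEq V] (G : SimpleGraph V) [DecidableRel G.Adj]
    (U W : Finset V) : ℕ :=
  ((U ×ˢ W).filter fun p => G.Adj p.1 p.2).card

open Finset Matrix in
open scoped InnerProductSpace in
set_option maxHeartbeats 1000000 in
/-- Let `G` be an `(n,d,λ)`-graph with `d − λ ≥ 2`. Then `G` is `d`-edge-connected: for every
nonempty proper subset `U` of the vertex set with `|U| ≤ n/2`, the number of edges of `G` with
exactly one endpoint in `U` is at least `d`. -/
theorem stmt_6 {V : Type*} [Fintype V] [DecidableEq V] (G : SimpleGraph V)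
    [DecidableRel G.Adj] (n d : ℕ) (lam : ℝ)
    (h : IsNDL G n d lam) (hdl : 2 ≤ (d : ℝ) - lam) :
    ∀ U : Finset V, U.Nonempty → U ≠ Finset.univ → 2 * U.card ≤ n →
      d ≤ eCount G U Uᶜ := by
  classical
  obtain ⟨hn, hreg, hA, i₀, hi₀, hlam⟩ := h
  intro U hUne hUuniv hUcard
  have hk1 : 1 ≤ U.card := hUne.card_pos
  -- counting: splitting the degree sum
  have hcount : ∀ W : Finset V, eCount G U W = ∑ v ∈ U, (W.filter (G.Adj v)).card := by
    intro W
    rw [eCount, Finset.card_filter, Finset.sum_product]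
    exact Finset.sum_congr rfl fun v _ => (Finset.card_filter _ _).symm
  have hsplit : eCount G U U + eCount G U Uᶜ = U.card * d := by
    rw [hcount, hcount, ← Finset.sum_add_distrib]
    have hpt : ∀ v ∈ U, (U.filter (G.Adj v)).card + (Uᶜ.filter (G.Adj v)).card = d := by
      intro v _
      rw [← Finset.card_union_of_disjoint
          (Finset.disjoint_filter_filter disjoint_compl_right),
        ← Finset.filter_union, Finset.union_compl, ← SimpleGraph.neighborFinset_eq_filter]
      exact hreg v
    rw [Finset.sum_congr rfl hpt, Finset.sum_const, smul_eq_mul]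
  by_cases hkd : U.card ≤ d
  · -- small case: e(U,Uᶜ) ≥ k(d+1-k) ≥ d
    have hsub : (U ×ˢ U).filter (fun p => G.Adj p.1 p.2) ⊆ U.offDiag := by
      intro p hp
      simp only [Finset.mem_filter, Finset.mem_product] at hp
      exact Finset.mem_offDiag.2 ⟨hp.1.1, hp.1.2, hp.2.ne⟩
    have h1 : eCount G U U ≤ U.card * U.card - U.card := by
      simpa [eCount, Finset.offDiag_card] using Finset.card_le_card hsub
    have h2 : eCount G U U + U.card ≤ U.card * U.card := by
      have : U.card ≤ U.card * U.card := Nat.le_mul_of_pos_left _ (by omega)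
      omega
    have hZ : (d : ℤ) ≤ eCount G U Uᶜ := by
      have e1 : (eCount G U U : ℤ) + eCount G U Uᶜ = U.card * d := by exact_mod_cast hsplit
      have e2 : (eCount G U U : ℤ) + U.card ≤ U.card * U.card := by exact_mod_cast h2
      have e3 : (1 : ℤ) ≤ U.card := by exact_mod_cast hk1
      have e4 : (U.card : ℤ) ≤ d := by exact_mod_cast hkd
      nlinarith
    exact_mod_cast hZ
  · -- large case: spectral bound
    have hkd' : d + 1 ≤ U.card := by omega
    set k : ℕ := U.card with hkdef
    set x : EuclideanSpace ℝ V :=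
      (WithLp.equiv 2 (V → ℝ)).symm (fun v => if v ∈ U then (1:ℝ) else 0) with hxdef
    set o : EuclideanSpace ℝ V :=
      (WithLp.equiv 2 (V → ℝ)).symm (fun _ => (1:ℝ)) with hodef
    have hxapp : ∀ v, x v = if v ∈ U then (1:ℝ) else 0 := fun v => rfl
    have hoapp : ∀ v, o v = 1 := fun v => rfl
    set y : EuclideanSpace ℝ V :=
      (WithLp.equiv 2 (V → ℝ)).symm (G.adjMatrix ℝ *ᵥ (x : V → ℝ)) with hydef
    have hyapp : (y : V → ℝ) = G.adjMatrix ℝ *ᵥ (x : V → ℝ) := rfl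
    have hin : ∀ u w : EuclideanSpace ℝ V, ⟪u, w⟫_ℝ = (u : V → ℝ) ⬝ᵥ (w : V → ℝ) := by
      intro u w
      simp [PiLp.inner_apply, dotProduct, RCLike.inner_apply, starRingEnd_apply, mul_comm]
    set B := hA.eigenvectorBasis with hBdef
    set μ := hA.eigenvalues with hμdef
    set c : V → ℝ := fun i => ⟪(B i : EuclideanSpace ℝ V), x⟫_ℝ with hcdef
    set a : V → ℝ := fun i => ⟪(B i : EuclideanSpace ℝ V), o⟫_ℝ with hadef
    have hBx : ∀ i, ⟪(B i : EuclideanSpace ℝ V), x⟫_ℝ = c i := fun _ => rfl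
    have hxB : ∀ i, ⟪x, (B i : EuclideanSpace ℝ V)⟫_ℝ = c i := fun i =>
      (real_inner_comm _ _).trans (hBx i)
    have hBo : ∀ i, ⟪(B i : EuclideanSpace ℝ V), o⟫_ℝ = a i := fun _ => rfl
    have hoB : ∀ i, ⟪o, (B i : EuclideanSpace ℝ V)⟫_ℝ = a i := fun i =>
      (real_inner_comm _ _).trans (hBo i)
    -- symmetric eigen-equation for vecMul
    have h2 : ∀ i, ((B i : EuclideanSpace ℝ V) : V → ℝ) ᵥ* G.adjMatrix ℝ
        = μ i • ((B i : EuclideanSpace ℝ V) : V → ℝ) := by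
      intro i
      ext v
      have := congrFun (hA.mulVec_eigenvectorBasis i) v
      rw [SimpleGraph.adjMatrix_mulVec_apply] at this
      rw [SimpleGraph.adjMatrix_vecMul_apply]
      exact this
    have key : ∀ (i : V) (w : EuclideanSpace ℝ V),
        ((B i : EuclideanSpace ℝ V) : V → ℝ) ⬝ᵥ (G.adjMatrix ℝ *ᵥ (w : V → ℝ))
          = μ i * ⟪(B i : EuclideanSpace ℝ V), w⟫_ℝ := by
      intro i w
      rw [Matrix.dotProduct_mulVec, h2 i, smul_dotProduct, hin]
      simp
    -- basic inner product values
    have hxx : ⟪x, x⟫_ℝ = (k : ℝ) := by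
      rw [hin]
      have : ∀ v, x v * x v = if v ∈ U then (1:ℝ) else 0 := by
        intro v; by_cases hv : v ∈ U <;> simp [hxapp, hv]
      simp only [dotProduct]
      rw [Finset.sum_congr rfl fun v _ => this v]
      simp [Finset.sum_ite_mem, hkdef]
    have hox : ⟪o, x⟫_ℝ = (k : ℝ) := by
      rw [hin]
      simp only [dotProduct, hxapp, hoapp, one_mul]
      simp [Finset.sum_ite_mem, hkdef]
    have hoo : ⟪o, o⟫_ℝ = (n : ℝ) := by
      rw [hin]
      simp [dotProduct, hoapp, ← hn]
    -- Parseval identities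
    have hP1 : ∑ i, c i * c i = (k : ℝ) := by
      have hp := B.sum_inner_mul_inner x x
      rw [hxx] at hp
      simp only [hxB, hBx] at hp
      exact hp
    have hBy : ∀ i, ⟪(B i : EuclideanSpace ℝ V), y⟫_ℝ = μ i * c i := by
      intro i
      rw [hin, hyapp]
      exact key i x
    have hS1R : (eCount G U U : ℝ) = ∑ i, c i * (μ i * c i) := by
      have hterm : ∀ v w : V, (if G.Adj v w then x v * x w else 0)
          = if v ∈ U ∧ w ∈ U ∧ G.Adj v w then (1:ℝ) else 0 := by
        intro v w
        by_cases h1 : v ∈ U <;> by_cases hw : w ∈ U <;> by_cases h3 : G.Adj v w <;>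
          simp [hxapp, h1, hw, h3]
      have hdot : (x : V → ℝ) ⬝ᵥ (G.adjMatrix ℝ *ᵥ (x : V → ℝ)) = (eCount G U U : ℝ) := by
        rw [SimpleGraph.dotProduct_mulVec_adjMatrix]
        rw [Finset.sum_congr rfl fun v _ => Finset.sum_congr rfl fun w _ => hterm v w]
        rw [eCount, Finset.card_filter, Finset.sum_product]
        push_cast
        simp [ite_and, Finset.sum_ite_mem]
      have hxy : ⟪x, y⟫_ℝ = (eCount G U U : ℝ) := by
        rw [hin x y]; exact hdot
      have hp := B.sum_inner_mul_inner x y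
      rw [hxy] at hp
      simp only [hxB, hBy] at hp
      exact hp.symm
    -- a i vanishes off i₀
    have hAo : G.adjMatrix ℝ *ᵥ (o : V → ℝ) = fun _ => (d : ℝ) := by
      ext v
      rw [SimpleGraph.adjMatrix_mulVec_apply]
      simp [hoapp, ← hreg v]
    have haval : ∀ i, ((B i : EuclideanSpace ℝ V) : V → ℝ) ⬝ᵥ (fun _ => (d : ℝ))
        = (d : ℝ) * a i := by
      intro i
      rw [hadef]
      simp only [hin, dotProduct, hoapp, mul_one]
      rw [Finset.mul_sum]
      exact Finset.sum_congr rfl fun v _ => by ring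
    have ha0 : ∀ i, i ≠ i₀ → a i = 0 := by
      intro i hi
      have h3 := key i o
      rw [hAo, haval i] at h3
      have hne : μ i ≠ (d : ℝ) := by
        have h5 := hlam i hi
        have h6 : μ i ≤ lam := le_trans (le_abs_self _) h5
        intro hcon; rw [hcon] at h6; linarith
      have h7 : (μ i - (d : ℝ)) * a i = 0 := by linarith [h3]
      rcases mul_eq_zero.1 h7 with h8 | h8
      · exact absurd (by linarith [h8] : μ i = (d:ℝ)) hne
      · exact h8
    have hP2 : a i₀ * c i₀ = (k : ℝ) := by
      have hp := B.sum_inner_mul_inner o x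
      rw [hox] at hp
      simp only [hoB, hBx] at hp
      have hz : ∀ i ∈ Finset.univ, i ≠ i₀ → a i * c i = 0 := fun i _ hi => by
        rw [ha0 i hi, zero_mul]
      rw [← hp, Finset.sum_eq_single i₀ hz (fun hmem => absurd (Finset.mem_univ i₀) hmem)]
    have hP3 : a i₀ * a i₀ = (n : ℝ) := by
      have hp := B.sum_inner_mul_inner o o
      rw [hoo] at hp
      simp only [hoB, hBo] at hp
      have hz : ∀ i ∈ Finset.univ, i ≠ i₀ → a i * a i = 0 := fun i _ hi => by
        rw [ha0 i hi, zero_mul]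
      rw [← hp, Finset.sum_eq_single i₀ hz (fun hmem => absurd (Finset.mem_univ i₀) hmem)]
    set t : ℝ := c i₀ with htdef
    have hnt : (n : ℝ) * (t * t) = (k : ℝ) * (k : ℝ) := by
      rw [← hP3, ← hP2]; ring
    have herase : ∑ i ∈ Finset.univ.erase i₀, c i * c i = (k : ℝ) - t * t := by
      rw [Finset.sum_erase_eq_sub (Finset.mem_univ i₀), hP1]
    have htk : (0 : ℝ) ≤ (k : ℝ) - t * t := by
      rw [← herase]
      exact Finset.sum_nonneg fun i _ => mul_self_nonneg _
    have hbd : ∑ i ∈ Finset.univ.erase i₀, c i * (μ i * c i) ≤ lam * ((k : ℝ) - t * t) := by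
      rw [← herase, Finset.mul_sum]
      refine Finset.sum_le_sum fun i hi => ?_
      have h5 := hlam i (Finset.ne_of_mem_erase hi)
      have h6 : μ i ≤ lam := le_trans (le_abs_self _) h5
      nlinarith [mul_self_nonneg (c i)]
    have hbound : (eCount G U U : ℝ) ≤ (d : ℝ) * (t * t) + lam * ((k : ℝ) - t * t) := by
      rw [hS1R, ← Finset.add_sum_erase _ _ (Finset.mem_univ i₀)]
      have : c i₀ * (μ i₀ * c i₀) = (d : ℝ) * (t * t) := by rw [hi₀]; ring
      linarith [hbd]
    -- arithmetic conclusion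
    have hcast : (eCount G U U : ℝ) + (eCount G U Uᶜ : ℝ) = (k : ℝ) * d := by
      exact_mod_cast hsplit
    have hnR : (0 : ℝ) < n := by
      have : 0 < n := by omega
      exact_mod_cast this
    have hkR : (d : ℝ) + 1 ≤ (k : ℝ) := by exact_mod_cast hkd'
    have h2k : 2 * (k : ℝ) ≤ (n : ℝ) := by exact_mod_cast hUcard
    have e1 : (n : ℝ) * ((k : ℝ) - t * t) = (k : ℝ) * ((n : ℝ) - k) := by
      linear_combination (-1 : ℝ) * hnt
    have e3 : ((d : ℝ) - lam) * ((k : ℝ) - t * t) ≤ (eCount G U Uᶜ : ℝ) := by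
      nlinarith [hbound, hcast]
    have hkR0 : (0:ℝ) ≤ (k : ℝ) := by positivity
    have hq1 : (0:ℝ) ≤ ((d : ℝ) - lam - 2) * ((k : ℝ) * ((n : ℝ) - k)) :=
      mul_nonneg (by linarith) (mul_nonneg hkR0 (by linarith))
    have hq2 : (0:ℝ) ≤ (k : ℝ) * ((n : ℝ) - 2 * k) := mul_nonneg hkR0 (by linarith)
    have hq3 : (0:ℝ) ≤ (n : ℝ) * ((k : ℝ) - d - 1) := mul_nonneg hnR.le (by linarith)
    have e2 : (d : ℝ) * n ≤ ((d : ℝ) - lam) * ((k : ℝ) * ((n : ℝ) - k)) := by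
      nlinarith [hq1, hq2, hq3, hnR]
    have hq4 := mul_le_mul_of_nonneg_left e3 hnR.le
    have hq5 : ((d : ℝ) - lam) * ((n : ℝ) * ((k : ℝ) - t * t))
        = ((d : ℝ) - lam) * ((k : ℝ) * ((n : ℝ) - k)) := by rw [e1]
    have final : (d : ℝ) ≤ (eCount G U Uᶜ : ℝ) := by
      nlinarith [hq4, hq5, e2, hnR]
    exact_mod_cast final
end

section
/- Let G be an (n,d,λ)-graph. Then for every nonempty subset U of the vertices of G, the induced subgraph G[U] contains a vertex whose degree in G[U] is at most d·|U|/n + λ·(1 − |U|/n) = (d − λ)·(|U|/n) + λ. -/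
open Matrix Finset
open scoped RealInnerProductSpace

/-- Coerce a plain function to `EuclideanSpace`. -/
noncomputable def toE {V : Type*} [Fintype V] (f : V → ℝ) : EuclideanSpace ℝ V :=
  (WithLp.equiv 2 (V → ℝ)).symm f

lemma inner_toE {V : Type*} [Fintype V] (f g : V → ℝ) : ⟪toE f, toE g⟫ = f ⬝ᵥ g := by
  simp [toE, PiLp.inner_apply, RCLike.inner_apply, dotProduct]
  exact Finset.sum_congr rfl fun _ _ => mul_comm _ _

lemma symm_swap {V : Type*} [Fintype V] (A : Matrix V V ℝ) (hs : A.IsSymm) (f g : V → ℝ) :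
    (A *ᵥ f) ⬝ᵥ g = f ⬝ᵥ (A *ᵥ g) := by
  rw [dotProduct_comm, Matrix.dotProduct_mulVec, ← Matrix.mulVec_transpose, hs.eq,
    dotProduct_comm, Matrix.dotProduct_mulVec, ← Matrix.mulVec_transpose, hs.eq]



/-- Let `G` be an `(n,d,λ)`-graph. Then for every nonempty vertex subset `U`, the induced
subgraph `G[U]` contains a vertex whose degree inside `U` is at most
`d·|U|/n + λ·(1 − |U|/n)`. -/
theorem stmt_10 {V : Type*} [Fintype V] [DecidableEq V] (G : SimpleGraph V)
    [DecidableRel G.Adj] (n d : ℕ) (lam : ℝ)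
    (h : IsNDL G n d lam) :
    ∀ U : Finset V, U.Nonempty →
      ∃ v ∈ U, ((U.filter fun u => G.Adj v u).card : ℝ) ≤
        (d : ℝ) * U.card / n + lam * (1 - (U.card : ℝ) / n) := by
  obtain ⟨hn, hreg, hA, i₀, hi₀, hbound⟩ := h
  intro U hU
  have hV : Nonempty V := ⟨hU.choose⟩
  have hn0 : 0 < (n : ℝ) := by
    have := Fintype.card_pos (α := V)
    rw [hn] at this
    exact_mod_cast this
  have hUn : (U.card : ℝ) ≤ n := by
    rw [← hn]; exact_mod_cast Finset.card_le_card (Finset.subset_univ U) |>.trans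
      (le_of_eq (Finset.card_univ))
  by_cases hdl : (d : ℝ) ≤ lam
  · -- trivial case: every degree is ≤ d ≤ bound
    refine ⟨hU.choose, hU.choose_spec, ?_⟩
    have h1 : ((U.filter fun u => G.Adj hU.choose u).card : ℝ) ≤ d := by
      have : (U.filter fun u => G.Adj hU.choose u) ⊆ G.neighborFinset hU.choose := by
        intro u hu
        simp only [Finset.mem_filter] at hu
        exact (G.mem_neighborFinset _ _).mpr hu.2
      have h2 := Finset.card_le_card this
      have h3 : (G.neighborFinset hU.choose).card = d := hreg hU.choose
      exact_mod_cast h3 ▸ h2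
    refine h1.trans ?_
    have hs1 : (U.card : ℝ) / n ≤ 1 := by
      rw [div_le_one hn0]; exact hUn
    have hs0 : 0 ≤ (U.card : ℝ) / n := by positivity
    rw [mul_div_assoc]
    nlinarith [mul_nonneg (sub_nonneg.mpr hdl) (sub_nonneg.mpr hs1)]
  · push_neg at hdl
    set A := G.adjMatrix ℝ with hAdef
    set b := hA.eigenvectorBasis with hbdef
    set μ := hA.eigenvalues with hμdef
    set xf : V → ℝ := fun v => if v ∈ U then 1 else 0 with hxf
    set onef : V → ℝ := fun _ => 1 with honef
    have hsymm : A.IsSymm := SimpleGraph.isSymm_adjMatrix G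
    set c : V → ℝ := fun i => (⇑(b i) : V → ℝ) ⬝ᵥ xf with hc
    set t : V → ℝ := fun i => (⇑(b i) : V → ℝ) ⬝ᵥ onef with ht
    have hbE : ∀ i : V, toE (⇑(b i)) = b i := fun _ => rfl
    -- inner products as dotProducts
    have hinner : ∀ (f g : V → ℝ), ⟪toE f, toE g⟫ = f ⬝ᵥ g := inner_toE
    -- eigen-dot lemma : (b i) ⬝ᵥ (A *ᵥ f) = μ i * ((b i) ⬝ᵥ f)
    have heig : ∀ (i : V) (f : V → ℝ), (⇑(b i)) ⬝ᵥ (A *ᵥ f) = μ i * ((⇑(b i)) ⬝ᵥ f) := by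
      intro i f
      rw [← symm_swap A hsymm, hA.mulVec_eigenvectorBasis, smul_dotProduct]
      rfl
    -- Parseval-type identities
    have hsum : ∀ (f g : V → ℝ),
        ∑ i : V, ((⇑(b i)) ⬝ᵥ f) * ((⇑(b i)) ⬝ᵥ g) = f ⬝ᵥ g := by
      intro f g
      have := b.sum_inner_mul_inner (toE f) (toE g)
      rw [hinner] at this
      rw [← this]
      refine Finset.sum_congr rfl fun i _ => ?_
      have e2 : ⟪b i, toE g⟫ = (⇑(b i)) ⬝ᵥ g := hinner _ g
      have e1 : ⟪toE f, b i⟫ = (⇑(b i)) ⬝ᵥ f := by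
        rw [real_inner_comm]; exact hinner _ f
      rw [e1, e2]
    -- A *ᵥ ones = d • ones
    have hones : A *ᵥ onef = fun _ => (d : ℝ) := by
      ext v
      rw [hAdef, SimpleGraph.adjMatrix_mulVec_apply]
      simp only [honef, Finset.sum_const, nsmul_eq_mul, mul_one]
      rw [← SimpleGraph.degree, hreg v]
    -- t i = 0 for i ≠ i₀
    have htzero : ∀ i : V, i ≠ i₀ → t i = 0 := by
      intro i hi
      have h1 : μ i * t i = (d : ℝ) * t i := by
        rw [ht, ← heig i onef, hones]
        simp [dotProduct, onef, Finset.mul_sum, mul_comm]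
      have h2 : μ i ≠ (d : ℝ) := by
        have := hbound i hi
        have := le_of_abs_le this
        linarith
      have := sub_eq_zero.mpr h1
      rcases mul_eq_zero.mp (by linarith [this] : (μ i - d) * t i = 0) with h | h
      · exact absurd (by linarith : μ i = d) h2
      · exact h
    -- collapse sums
    have htt : t i₀ * t i₀ = (n : ℝ) := by
      have h1 := hsum onef onef
      have h2 : onef ⬝ᵥ onef = (n : ℝ) := by
        simp [dotProduct, onef, ← hn]
      rw [h2] at h1
      rw [← h1, Finset.sum_eq_single i₀]
      · intro i _ hi; rw [show ((⇑(b i)) ⬝ᵥ onef) = t i from rfl, htzero i hi]; ring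
      · intro habs; exact absurd (Finset.mem_univ i₀) habs
    have htc : t i₀ * c i₀ = (U.card : ℝ) := by
      have h1 := hsum onef xf
      have h2 : onef ⬝ᵥ xf = (U.card : ℝ) := by
        simp [dotProduct, onef, xf]
      rw [h2] at h1
      rw [← h1, Finset.sum_eq_single i₀]
      · intro i _ hi; rw [show ((⇑(b i)) ⬝ᵥ onef) = t i from rfl, htzero i hi]; ring
      · intro habs; exact absurd (Finset.mem_univ i₀) habs
    have hcc : c i₀ * c i₀ = (U.card : ℝ) ^ 2 / n := by
      have h1 : (t i₀ * c i₀) * (t i₀ * c i₀) = (U.card : ℝ) ^ 2 := by rw [htc]; ring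
      have hne : (n : ℝ) ≠ 0 := ne_of_gt hn0
      field_simp
      nlinarith [htt, h1]
    -- Parseval for x
    have hxx : ∑ i : V, c i * c i = (U.card : ℝ) := by
      have h1 := hsum xf xf
      have h2 : xf ⬝ᵥ xf = (U.card : ℝ) := by
        simp [dotProduct, xf, ite_and]
      rw [h2] at h1; exact h1
    -- spectral expansion of the quadratic form
    have hquad : xf ⬝ᵥ (A *ᵥ xf) = ∑ i : V, μ i * (c i * c i) := by
      have h1 := hsum xf (A *ᵥ xf)
      rw [← h1]
      refine Finset.sum_congr rfl fun i _ => ?_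
      rw [heig i xf]; ring
    -- combinatorial identity
    have hcomb : ∑ v ∈ U, ((U.filter fun u => G.Adj v u).card : ℝ) = xf ⬝ᵥ (A *ᵥ xf) := by
      have h1 : ∀ v : V, (A *ᵥ xf) v = ((U.filter fun u => G.Adj v u).card : ℝ) := by
        intro v
        rw [hAdef, SimpleGraph.adjMatrix_mulVec_apply, hxf]
        rw [Finset.sum_boole]
        have hfe : ((G.neighborFinset v).filter fun u => u ∈ U) =
            U.filter fun u => G.Adj v u := by
          ext u; simp [SimpleGraph.mem_neighborFinset, and_comm]
        rw [hfe]
      rw [dotProduct]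
      simp only [hxf, ite_mul, one_mul, zero_mul, Finset.sum_ite_mem, Finset.univ_inter]
      exact Finset.sum_congr rfl fun v _ => (h1 v).symm
    -- the upper bound on the quadratic form
    have hbound2 : ∑ i : V, μ i * (c i * c i) ≤
        (d : ℝ) * (U.card : ℝ) ^ 2 / n + lam * ((U.card : ℝ) - (U.card : ℝ) ^ 2 / n) := by
      have hsplit : ∑ i : V, μ i * (c i * c i) =
          μ i₀ * (c i₀ * c i₀) + ∑ i ∈ Finset.univ.erase i₀, μ i * (c i * c i) := by
        exact (Finset.add_sum_erase _ (fun i => μ i * (c i * c i)) (Finset.mem_univ i₀)).symm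
      have herase : ∑ i ∈ Finset.univ.erase i₀, μ i * (c i * c i) ≤
          lam * ((U.card : ℝ) - (U.card : ℝ) ^ 2 / n) := by
        have h1 : ∑ i ∈ Finset.univ.erase i₀, μ i * (c i * c i) ≤
            ∑ i ∈ Finset.univ.erase i₀, lam * (c i * c i) := by
          refine Finset.sum_le_sum fun i hi => ?_
          have hμi : μ i ≤ lam := le_of_abs_le (hbound i (Finset.ne_of_mem_erase hi))
          nlinarith [mul_self_nonneg (c i)]
        have h2 : ∑ i ∈ Finset.univ.erase i₀, c i * c i =
            (U.card : ℝ) - (U.card : ℝ) ^ 2 / n := by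
          have h3 : c i₀ * c i₀ + ∑ x ∈ Finset.univ.erase i₀, c x * c x = (U.card : ℝ) := by
            rw [← hxx]
            exact Finset.add_sum_erase _ (fun i => c i * c i) (Finset.mem_univ i₀)
          rw [← hcc]; linarith
        calc ∑ i ∈ Finset.univ.erase i₀, μ i * (c i * c i)
            ≤ ∑ i ∈ Finset.univ.erase i₀, lam * (c i * c i) := h1
          _ = lam * ∑ i ∈ Finset.univ.erase i₀, c i * c i := by rw [Finset.mul_sum]
          _ = lam * ((U.card : ℝ) - (U.card : ℝ) ^ 2 / n) := by rw [h2]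
      rw [hsplit, hi₀, hcc]
      linarith [herase, mul_div_assoc (d : ℝ) ((U.card : ℝ) ^ 2) (n : ℝ)]
    -- put it together
    have hfinal : ∑ v ∈ U, ((U.filter fun u => G.Adj v u).card : ℝ) ≤
        ∑ _v ∈ U, ((d : ℝ) * U.card / n + lam * (1 - (U.card : ℝ) / n)) := by
      rw [hcomb, hquad, Finset.sum_const, nsmul_eq_mul]
      refine hbound2.trans (le_of_eq ?_)
      have hne : (n : ℝ) ≠ 0 := ne_of_gt hn0
      field_simp
    exact Finset.exists_le_of_sum_le hU hfinal
end

section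
/- Let G be an (n,d,λ)-graph with λ > 0. Then the chromatic number of G satisfies χ(G) ≥ 1 + d/λ. -/
open Matrix in
/-- Let `G` be an `(n,d,λ)`-graph with `λ > 0`. Then the chromatic number of `G` is at least
`1 + d/λ`: every proper coloring uses at least `1 + d/λ` colors. -/
theorem stmt_12 {V : Type*} [Fintype V] [DecidableEq V] (G : SimpleGraph V)
    [DecidableRel G.Adj] (n d : ℕ) (lam : ℝ)
    (h : IsNDL G n d lam) (hl : 0 < lam) :
    ∀ k : ℕ, G.Colorable k → 1 + (d : ℝ) / lam ≤ k := by
  intro k hk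
  obtain ⟨hn, hreg, hA, i₀, hi₀, hbound⟩ := h
  obtain ⟨C⟩ := hk
  classical
  have hVpos : 0 < (n : ℝ) := by
    have hne : Nonempty V := ⟨i₀⟩
    have := Fintype.card_pos (α := V)
    rw [hn] at this
    exact_mod_cast this
  -- all eigenvalues are at least `-lam`
  have hev : ∀ i, 0 ≤ hA.eigenvalues i + lam := by
    intro i
    by_cases hi : i = i₀
    · rw [hi, hi₀]; positivity
    · have h1 := hbound i hi
      have h2 := neg_abs_le (hA.eigenvalues i)
      linarith
  -- hence `A + lam • 1` is positive semidefinite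
  have hpsd : (G.adjMatrix ℝ + lam • 1).PosSemidef := by
    have hU : (hA.eigenvectorUnitary : Matrix V V ℝ) *
        star (hA.eigenvectorUnitary : Matrix V V ℝ) = 1 :=
      (Matrix.mem_unitaryGroup_iff).mp (hA.eigenvectorUnitary).2
    have hdiag : Matrix.diagonal (RCLike.ofReal ∘ hA.eigenvalues) + lam • (1 : Matrix V V ℝ)
        = Matrix.diagonal (fun i => hA.eigenvalues i + lam) := by
      ext i j
      by_cases hij : i = j <;>
        simp [Matrix.diagonal, hij, Matrix.one_apply]
    have heq : G.adjMatrix ℝ + lam • 1 = (hA.eigenvectorUnitary : Matrix V V ℝ) *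
        Matrix.diagonal (fun i => hA.eigenvalues i + lam) *
        star (hA.eigenvectorUnitary : Matrix V V ℝ) := by
      rw [← hdiag, Matrix.mul_add, Matrix.add_mul, Matrix.mul_smul, Matrix.smul_mul,
        Matrix.mul_one, hU]
      conv_lhs => rw [hA.spectral_theorem]
      rw [Unitary.conjStarAlgAut_apply]
    rw [heq]
    exact (Matrix.posSemidef_diagonal_iff.mpr hev).mul_mul_conjTranspose_same _
  have hquad : ∀ y : V → ℝ, 0 ≤ y ⬝ᵥ (G.adjMatrix ℝ *ᵥ y) + lam * (y ⬝ᵥ y) := by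
    intro y
    have h0 := hpsd.dotProduct_mulVec_nonneg y
    simpa [Matrix.add_mulVec, Matrix.smul_mulVec, Matrix.one_mulVec,
      dotProduct_smul, smul_eq_mul] using h0
  -- key estimate for each color class
  have hclass : ∀ c : Fin k,
      ((d : ℝ) + lam) * ((Finset.univ.filter (fun v => C v = c)).card : ℝ) ≤ lam * n := by
    intro c
    set s : ℕ := (Finset.univ.filter (fun v => C v = c)).card with hs
    set x : V → ℝ := fun v => if C v = c then 1 else 0 with hxdef
    have hxsq : ∀ v, x v * x v = x v := by
      intro v; by_cases hv : C v = c <;> simp [hxdef, hv]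
    have hxsum : ∑ v, x v = (s : ℝ) := by
      simp only [hxdef]
      rw [Finset.sum_boole]
    have hxx : x ⬝ᵥ x = (s : ℝ) := by
      simp only [dotProduct]
      rw [Finset.sum_congr rfl fun v _ => hxsq v, hxsum]
    have hx1 : x ⬝ᵥ (fun _ : V => (1 : ℝ)) = (s : ℝ) := by
      simpa [dotProduct] using hxsum
    have h1x : (fun _ : V => (1 : ℝ)) ⬝ᵥ x = (s : ℝ) := by
      simpa [dotProduct] using hxsum
    have h11 : (fun _ : V => (1 : ℝ)) ⬝ᵥ (fun _ : V => (1 : ℝ)) = (n : ℝ) := by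
      simp [dotProduct, hn]
    have hA1 : G.adjMatrix ℝ *ᵥ (fun _ : V => (1 : ℝ)) = fun _ => (d : ℝ) := by
      funext v
      have := SimpleGraph.adjMatrix_mulVec_const_apply_of_regular
        (α := ℝ) (a := (1 : ℝ)) hreg (v := v)
      simpa [Function.const] using this
    have hAx0 : x ⬝ᵥ (G.adjMatrix ℝ *ᵥ x) = 0 := by
      simp only [dotProduct, SimpleGraph.adjMatrix_mulVec_apply]
      apply Finset.sum_eq_zero
      intro v _
      by_cases hv : C v = c
      · have : ∑ u ∈ G.neighborFinset v, x u = 0 := by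
          apply Finset.sum_eq_zero
          intro u hu
          have hadj : G.Adj v u := (G.mem_neighborFinset v u).mp hu
          have : C u ≠ c := fun huc => C.valid hadj (hv.trans huc.symm)
          simp [hxdef, this]
        rw [this, mul_zero]
      · simp [hxdef, hv]
    have h1Ax : (fun _ : V => (1 : ℝ)) ⬝ᵥ (G.adjMatrix ℝ *ᵥ x) = (d : ℝ) * s := by
      rw [Matrix.dotProduct_mulVec]
      have hrow : (fun _ : V => (1 : ℝ)) ᵥ* G.adjMatrix ℝ = fun _ => (d : ℝ) := by
        funext v
        simp [SimpleGraph.adjMatrix_vecMul_apply, hreg v]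
      rw [hrow]
      simp only [dotProduct]
      rw [← Finset.mul_sum, hxsum]
    have hxA1 : x ⬝ᵥ (G.adjMatrix ℝ *ᵥ (fun _ : V => (1 : ℝ))) = (d : ℝ) * s := by
      rw [hA1]
      simp only [dotProduct]
      rw [Finset.sum_congr rfl fun v _ => mul_comm (x v) ((d : ℝ)), ← Finset.mul_sum, hxsum]
    have h1A1 : (fun _ : V => (1 : ℝ)) ⬝ᵥ (G.adjMatrix ℝ *ᵥ (fun _ : V => (1 : ℝ)))
        = (d : ℝ) * n := by
      rw [hA1]
      simp only [dotProduct, one_mul]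
      rw [Finset.sum_const, Finset.card_univ, hn, nsmul_eq_mul]
      ring
    -- apply the quadratic form bound to `n • x - s • 1`
    have key := hquad ((n : ℝ) • x - (s : ℝ) • (fun _ : V => (1 : ℝ)))
    rw [Matrix.mulVec_sub, Matrix.mulVec_smul, Matrix.mulVec_smul] at key
    simp only [sub_dotProduct, dotProduct_sub, smul_dotProduct,
      dotProduct_smul, smul_eq_mul, hAx0, h1Ax, hxA1, hxx, hx1, h1x, h11, h1A1] at key
    -- key : 0 ≤ n*(n*0 - s*(d*s)) - s*(n*(d*s) - s*(d*n)) + lam * (...)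
    have hsn : (s : ℝ) ≤ (n : ℝ) := by
      have : s ≤ Fintype.card V := Finset.card_filter_le _ _
      rw [hn] at this
      exact_mod_cast this
    rcases Nat.eq_zero_or_pos s with hs0 | hspos
    · rw [hs0]
      push_cast
      nlinarith [hVpos, hl]
    · have hsposR : 0 < (s : ℝ) := by exact_mod_cast hspos
      have hns : 0 < (n : ℝ) * s := mul_pos hVpos hsposR
      have key2 : 0 ≤ (n : ℝ) * s * (lam * n - ((d : ℝ) + lam) * s) := by linarith [key]
      have h3 : 0 ≤ lam * (n : ℝ) - ((d : ℝ) + lam) * s := by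
        by_contra hcon
        push_neg at hcon
        have := mul_neg_of_pos_of_neg hns hcon
        linarith
      linarith
  -- sum over the color classes
  have hsum : ∑ c : Fin k, ((Finset.univ.filter (fun v => C v = c)).card : ℝ) = (n : ℝ) := by
    rw [← Nat.cast_sum]
    congr 1
    rw [← hn, ← Finset.card_univ]
    exact (Finset.card_eq_sum_card_fiberwise fun v _ => Finset.mem_univ (C v)).symm
  have hfinal : ((d : ℝ) + lam) * n ≤ (k : ℝ) * (lam * n) := by
    calc ((d : ℝ) + lam) * n
        = ∑ c : Fin k, ((d : ℝ) + lam) * ((Finset.univ.filter (fun v => C v = c)).card : ℝ) := by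
          rw [← Finset.mul_sum, hsum]
      _ ≤ ∑ _c : Fin k, lam * n := Finset.sum_le_sum fun c _ => hclass c
      _ = (k : ℝ) * (lam * n) := by
          simp [Finset.sum_const, Finset.card_univ]
  have hdk : (d : ℝ) + lam ≤ (k : ℝ) * lam := by
    have := mul_le_mul_of_nonneg_right hfinal (le_of_lt (inv_pos.mpr hVpos))
    rw [mul_assoc, mul_assoc, mul_assoc, mul_inv_cancel₀ (ne_of_gt hVpos), mul_one] at this
    linarith [this]
  have : (d : ℝ) / lam ≤ (k : ℝ) - 1 := by
    rw [div_le_iff₀ hl]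
    nlinarith
  linarith
end
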